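/- arXiv:0912.4522 — 5 statements merged into one kernel-verified Lean document; each statement's English description precedes it below -/
import Mathlib

section
/- For every μ > 0, the function q(x,t) = x^(μ−1) e^(−x/t) / (t^μ Γ(μ)), defined for x > 0 and t > 0, satisfies the second-order partial differential equation ∂q/∂t = x ∂²q/∂x² − (μ−2) ∂q/∂x for all x > 0 and t > 0. -/
/-- The Gamma process density `q(x,t) = x^(μ−1) e^(−x/t) / (t^μ Γ(μ))`
satisfies `∂q/∂t = x ∂²q/∂x² − (μ−2) ∂q/∂x` for all `x > 0`, `t > 0`. -/
theorem stmt_0 (μ : ℝ) (hμ : 0 < μ)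
    (q : ℝ → ℝ → ℝ)
    (hq : ∀ x t : ℝ, q x t = x ^ (μ - 1) * Real.exp (-x / t) / (t ^ μ * Real.Gamma μ)) :
    ∀ x t : ℝ, 0 < x → 0 < t →
      deriv (fun τ => q x τ) t
        = x * deriv (deriv (fun ξ => q ξ t)) x - (μ - 2) * deriv (fun ξ => q ξ t) x := by
  intro x t hx ht
  have hΓ : 0 < Real.Gamma μ := Real.Gamma_pos_of_pos hμ
  have htμ : (0:ℝ) < t ^ μ := Real.rpow_pos_of_pos ht μ
  set C : ℝ := t ^ μ * Real.Gamma μ with hC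
  have hCpos : 0 < C := mul_pos htμ hΓ
  have hCne : C ≠ 0 := hCpos.ne'
  -- exp factor derivative in ξ (at any point ξ)
  have hexp : ∀ ξ : ℝ, HasDerivAt (fun y : ℝ => Real.exp (-y / t))
      (Real.exp (-ξ / t) * (-1 / t)) ξ := by
    intro ξ
    have h1 : HasDerivAt (fun y : ℝ => -y / t) (-1 / t) ξ :=
      ((hasDerivAt_id ξ).neg).div_const t
    exact h1.exp
  -- first x-derivative, valid for all ξ > 0
  have hD1 : ∀ ξ : ℝ, 0 < ξ → HasDerivAt (fun y => q y t)
      (((μ - 1) * ξ ^ (μ - 2) * Real.exp (-ξ / t)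
        + ξ ^ (μ - 1) * (Real.exp (-ξ / t) * (-1 / t))) / C) ξ := by
    intro ξ hξ
    have hpow : HasDerivAt (fun y : ℝ => y ^ (μ - 1)) ((μ - 1) * ξ ^ (μ - 1 - 1)) ξ :=
      Real.hasDerivAt_rpow_const (Or.inl hξ.ne')
    have hnum := hpow.mul (hexp ξ)
    have := hnum.div_const C
    have heq : (fun y : ℝ => q y t) = fun y => y ^ (μ - 1) * Real.exp (-y / t) / C := by
      funext y; rw [hq, hC]
    rw [heq]
    convert this using 2 <;> first | rfl | ring_nf
  -- value of the first derivative near x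
  have hd1eq : deriv (fun y => q y t) =ᶠ[nhds x]
      (fun y => ((μ - 1) * y ^ (μ - 2) * Real.exp (-y / t)
        + y ^ (μ - 1) * (Real.exp (-y / t) * (-1 / t))) / C) := by
    filter_upwards [Ioi_mem_nhds hx] with y hy
    exact (hD1 y hy).deriv
  have hd1x : deriv (fun y => q y t) x
      = ((μ - 1) * x ^ (μ - 2) * Real.exp (-x / t)
        + x ^ (μ - 1) * (Real.exp (-x / t) * (-1 / t))) / C := (hD1 x hx).deriv
  -- second x-derivative
  have hD2 : HasDerivAt (fun y => ((μ - 1) * y ^ (μ - 2) * Real.exp (-y / t)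
        + y ^ (μ - 1) * (Real.exp (-y / t) * (-1 / t))) / C)
      ((((μ - 1) * ((μ - 2) * x ^ (μ - 3))) * Real.exp (-x / t)
        + ((μ - 1) * x ^ (μ - 2)) * (Real.exp (-x / t) * (-1 / t))
        + (((μ - 1) * x ^ (μ - 2)) * (Real.exp (-x / t) * (-1 / t))
          + x ^ (μ - 1) * (Real.exp (-x / t) * (-1 / t) * (-1 / t)))) / C) x := by
    have hp2 : HasDerivAt (fun y : ℝ => y ^ (μ - 2)) ((μ - 2) * x ^ (μ - 3)) x := by
      have := Real.hasDerivAt_rpow_const (x := x) (p := μ - 2) (Or.inl hx.ne')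
      convert this using 2
      ring_nf
    have hp1 : HasDerivAt (fun y : ℝ => y ^ (μ - 1)) ((μ - 1) * x ^ (μ - 2)) x := by
      have := Real.hasDerivAt_rpow_const (x := x) (p := μ - 1) (Or.inl hx.ne')
      convert this using 2
      ring_nf
    have hexp' := hexp x
    have hterm1 := ((hp2.const_mul (μ - 1)).mul hexp')
    have hterm2 := hp1.mul (hexp'.mul_const ((-1:ℝ) / t))
    have := (hterm1.add hterm2).div_const C
    convert this using 1 <;> first | rfl | ring
  have hder2 : deriv (deriv (fun y => q y t)) x
      = (((μ - 1) * ((μ - 2) * x ^ (μ - 3))) * Real.exp (-x / t)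
        + ((μ - 1) * x ^ (μ - 2)) * (Real.exp (-x / t) * (-1 / t))
        + (((μ - 1) * x ^ (μ - 2)) * (Real.exp (-x / t) * (-1 / t))
          + x ^ (μ - 1) * (Real.exp (-x / t) * (-1 / t) * (-1 / t)))) / C := by
    rw [hd1eq.deriv_eq]
    exact hD2.deriv
  -- t-derivative
  have hdt : deriv (fun τ => q x τ) t
      = (x ^ (μ - 1) * (Real.exp (-x / t) * (x / t ^ 2)) * (t ^ μ * Real.Gamma μ)
        - x ^ (μ - 1) * Real.exp (-x / t) * (μ * t ^ (μ - 1) * Real.Gamma μ))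
        / (t ^ μ * Real.Gamma μ) ^ 2 := by
    have hinner : HasDerivAt (fun τ : ℝ => -x / τ) (x / t ^ 2) t := by
      have h1 : HasDerivAt (fun τ : ℝ => τ⁻¹) (-(t ^ 2)⁻¹) t := hasDerivAt_inv ht.ne'
      have h2 := h1.const_mul (-x)
      have heq : (fun τ : ℝ => -x * τ⁻¹) = fun τ => -x / τ := by
        funext τ; rw [div_eq_mul_inv]
      rw [heq] at h2
      convert h2 using 1 <;> first | rfl | (field_simp) | ring
    have hnum : HasDerivAt (fun τ : ℝ => x ^ (μ - 1) * Real.exp (-x / τ))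
        (x ^ (μ - 1) * (Real.exp (-x / t) * (x / t ^ 2))) t :=
      (hinner.exp).const_mul _
    have hden : HasDerivAt (fun τ : ℝ => τ ^ μ * Real.Gamma μ)
        (μ * t ^ (μ - 1) * Real.Gamma μ) t :=
      (Real.hasDerivAt_rpow_const (Or.inl ht.ne')).mul_const _
    have hdenne : t ^ μ * Real.Gamma μ ≠ 0 := hCne
    have := hnum.div hden hdenne
    have heq : (fun τ => q x τ) = fun τ => x ^ (μ - 1) * Real.exp (-x / τ) / (τ ^ μ * Real.Gamma μ) := by
      funext τ; rw [hq]
    rw [heq]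
    exact this.deriv
  rw [hdt, hder2, hd1x]
  -- now pure algebra with rpow identities
  have e2 : x ^ (μ - 2) = x ^ (μ - 3) * x := by
    rw [← Real.rpow_add_one hx.ne' (μ - 3)]
    congr 1; ring
  have e1 : x ^ (μ - 1) = x ^ (μ - 3) * x * x := by
    rw [← e2, ← Real.rpow_add_one hx.ne' (μ - 2)]
    congr 1; ring
  have e3 : t ^ μ = t ^ (μ - 1) * t := by
    rw [← Real.rpow_add_one ht.ne' (μ - 1)]
    congr 1; ring
  have htp : (0:ℝ) < t ^ (μ - 1) := Real.rpow_pos_of_pos ht _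
  rw [hC, e1, e2, e3]
  field_simp
  ring
end

section
/- For every μ > 0 and γ > 0, the function q(x,t) = Q(x;t,μ,γ) = γ x^(γμ−1) e^(−x^γ/t) / (t^μ Γ(μ)) satisfies, for all x > 0 and t > 0, the partial differential equation ∂q/∂t = (1/γ²) [ ∂/∂x ( x^(2−γ) ∂q/∂x ) − (γμ − 1) ∂/∂x ( x^(1−γ) q ) ]. -/
/-- The generalized Gamma density `Q(x;t,μ,γ) = γ x^(γμ−1) e^(−x^γ/t) / (t^μ Γ(μ))`. -/
noncomputable def Q (x t μ γ : ℝ) : ℝ :=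
  γ * x ^ (γ * μ - 1) * Real.exp (-(x ^ γ) / t) / (t ^ μ * Real.Gamma μ)

/-- the generalized Gamma density satisfies
`∂q/∂t = (1/γ²) [ ∂/∂x ( x^(2−γ) ∂q/∂x ) − (γμ − 1) ∂/∂x ( x^(1−γ) q ) ]`
for all `x > 0`, `t > 0`. -/
theorem stmt_2 (μ γ : ℝ) (hμ : 0 < μ) (hγ : 0 < γ) :
    ∀ x t : ℝ, 0 < x → 0 < t →
      deriv (fun τ => Q x τ μ γ) t
        = (1 / γ ^ 2) *
            (deriv (fun ξ => ξ ^ (2 - γ) * deriv (fun y => Q y t μ γ) ξ) x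
              - (γ * μ - 1) * deriv (fun ξ => ξ ^ (1 - γ) * Q ξ t μ γ) x) := by
  intro x t hx ht
  have hxne : x ≠ 0 := ne_of_gt hx
  have htne : t ≠ 0 := ne_of_gt ht
  have hΓ : 0 < Real.Gamma μ := Real.Gamma_pos_of_pos hμ
  have htp : (0:ℝ) < t ^ μ := Real.rpow_pos_of_pos ht μ
  have hDne : t ^ μ * Real.Gamma μ ≠ 0 := ne_of_gt (mul_pos htp hΓ)
  -- power rule at x
  have hrp : ∀ a : ℝ, HasDerivAt (fun y : ℝ => y ^ a) (a * x ^ (a - 1)) x :=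
    fun a => Real.hasDerivAt_rpow_const (Or.inl hxne)
  -- x-derivative of Q at any ξ > 0
  have hQd : ∀ ξ : ℝ, 0 < ξ → HasDerivAt (fun y => Q y t μ γ)
      ((γ * ((γ * μ - 1) * ξ ^ (γ * μ - 1 - 1)) * Real.exp (-(ξ ^ γ) / t)
        + γ * ξ ^ (γ * μ - 1) * (Real.exp (-(ξ ^ γ) / t) * (-(γ * ξ ^ (γ - 1)) / t)))
        / (t ^ μ * Real.Gamma μ)) ξ := by
    intro ξ hξ
    simp only [Q]
    have he : HasDerivAt (fun y : ℝ => Real.exp (-(y ^ γ) / t))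
        (Real.exp (-(ξ ^ γ) / t) * (-(γ * ξ ^ (γ - 1)) / t)) ξ := by
      have := (((Real.hasDerivAt_rpow_const (p := γ) (Or.inl hξ.ne')).neg.div_const t).exp)
      simpa using this
    exact (((Real.hasDerivAt_rpow_const (p := γ * μ - 1) (Or.inl hξ.ne')).const_mul γ).mul
      he).div_const _
  -- exponential factor derivative at x
  have hexpx : HasDerivAt (fun y : ℝ => Real.exp (-(y ^ γ) / t))
      (Real.exp (-(x ^ γ) / t) * (-(γ * x ^ (γ - 1)) / t)) x := by
    have := (((Real.hasDerivAt_rpow_const (p := γ) (Or.inl hxne)).neg.div_const t).exp)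
    simpa using this
  -- t-derivative of Q at t
  have hden : HasDerivAt (fun τ : ℝ => τ ^ μ * Real.Gamma μ)
      (μ * t ^ (μ - 1) * Real.Gamma μ) t :=
    (Real.hasDerivAt_rpow_const (Or.inl htne)).mul_const _
  have hT : HasDerivAt (fun τ : ℝ => Q x τ μ γ) _ t :=
    ((((hasDerivAt_const t (-(x ^ γ))).div (hasDerivAt_id t) htne).exp).const_mul
      (γ * x ^ (γ * μ - 1))).div hden hDne
  -- the first inner function agrees with an explicit formula near x
  have hev : (fun ξ => ξ ^ (2 - γ) * deriv (fun y => Q y t μ γ) ξ) =ᶠ[nhds x]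
      (fun ξ => ξ ^ (2 - γ) *
        ((γ * ((γ * μ - 1) * ξ ^ (γ * μ - 1 - 1)) * Real.exp (-(ξ ^ γ) / t)
          + γ * ξ ^ (γ * μ - 1) * (Real.exp (-(ξ ^ γ) / t) * (-(γ * ξ ^ (γ - 1)) / t)))
          / (t ^ μ * Real.Gamma μ))) := by
    filter_upwards [eventually_gt_nhds hx] with ξ hξ
    rw [(hQd ξ hξ).deriv]
  have hF : HasDerivAt (fun ξ : ℝ => ξ ^ (2 - γ) *
      ((γ * ((γ * μ - 1) * ξ ^ (γ * μ - 1 - 1)) * Real.exp (-(ξ ^ γ) / t)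
        + γ * ξ ^ (γ * μ - 1) * (Real.exp (-(ξ ^ γ) / t) * (-(γ * ξ ^ (γ - 1)) / t)))
        / (t ^ μ * Real.Gamma μ))) _ x :=
    (hrp (2 - γ)).mul
      (((((hrp (γ * μ - 1 - 1)).const_mul (γ * μ - 1)).const_mul γ).mul hexpx).add
        (((hrp (γ * μ - 1)).const_mul γ).mul
          (hexpx.mul (((hrp (γ - 1)).const_mul γ).neg.div_const t))) |>.div_const
        (t ^ μ * Real.Gamma μ))
  have hG : HasDerivAt (fun ξ : ℝ => ξ ^ (1 - γ) * Q ξ t μ γ) _ x :=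
    (hrp (1 - γ)).mul (hQd x hx)
  rw [hT.deriv, hev.deriv_eq, hF.deriv, hG.deriv]
  simp only [Pi.div_apply, Pi.mul_apply, Pi.neg_apply, id]
  simp only [Q]
  simp only [Real.rpow_def_of_pos hx, Real.rpow_def_of_pos ht]
  simp only [mul_sub, mul_add, mul_one, mul_two, Real.exp_sub, Real.exp_add, Real.exp_log hx, Real.exp_log ht]
  field_simp
  ring
end

section
/- For every μ > 0, γ > 0, t > 0 and every real η with η < γμ + 1, the Mellin transform of the inverse generalized Gamma density satisfies ∫₀^∞ x^(η−1) · γ x^(−γμ−1) e^(−1/(x^γ t)) / (t^μ Γ(μ)) dx = ( Γ((1−η)/γ + μ) / Γ(μ) ) · t^((1−η)/γ). -/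
open MeasureTheory

/-- the Mellin transform of the inverse generalized Gamma density
`γ x^(−γμ−1) e^(−1/(x^γ t)) / (t^μ Γ(μ))` is `(Γ((1−η)/γ + μ)/Γ(μ)) t^((1−η)/γ)`
for `η < γμ + 1`. -/
theorem stmt_4 (μ γ t η : ℝ) (hμ : 0 < μ) (hγ : 0 < γ) (ht : 0 < t)
    (hη : η < γ * μ + 1) :
    (∫ x in Set.Ioi (0:ℝ),
        x ^ (η - 1) *
          (γ * x ^ (-(γ * μ) - 1) * Real.exp (-(1 / (x ^ γ * t))) / (t ^ μ * Real.Gamma μ)))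
      = (Real.Gamma ((1 - η) / γ + μ) / Real.Gamma μ) * t ^ ((1 - η) / γ) := by
  have hΓ : 0 < Real.Gamma μ := Real.Gamma_pos_of_pos hμ
  set q : ℝ := γ * μ - η with hqdef
  have hq1 : (-1 : ℝ) < q := by simp only [hqdef]; linarith
  have hb : (0:ℝ) < 1 / t := by positivity
  have key : ∫ x in Set.Ioi (0:ℝ), x ^ q * Real.exp (-(1/t) * x ^ γ)
      = (1/t) ^ (-(q+1)/γ) * (1/γ) * Real.Gamma ((q+1)/γ) :=
    integral_rpow_mul_exp_neg_mul_rpow hγ hq1 hb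
  have sub : ∫ x in Set.Ioi (0:ℝ), x ^ (-q-2) * Real.exp (-(1/t) * x ^ (-γ))
      = ∫ x in Set.Ioi (0:ℝ), x ^ q * Real.exp (-(1/t) * x ^ γ) := by
    rw [← integral_comp_rpow_Ioi (fun y => y ^ q * Real.exp (-(1/t) * y ^ γ))
      (show (-1:ℝ) ≠ 0 by norm_num)]
    refine setIntegral_congr_fun measurableSet_Ioi (fun x hx => ?_)
    have hx0 : (0:ℝ) < x := hx
    simp only [smul_eq_mul, abs_neg, abs_one, one_mul]
    rw [← Real.rpow_mul hx0.le, ← Real.rpow_mul hx0.le, ← mul_assoc, ← Real.rpow_add hx0,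
      show (-1:ℝ) - 1 + -1 * q = -q - 2 by ring, show (-1:ℝ) * γ = -γ by ring]
  have lhs_eq : (∫ x in Set.Ioi (0:ℝ),
        x ^ (η - 1) *
          (γ * x ^ (-(γ * μ) - 1) * Real.exp (-(1 / (x ^ γ * t))) / (t ^ μ * Real.Gamma μ)))
      = (γ / (t ^ μ * Real.Gamma μ)) *
          ∫ x in Set.Ioi (0:ℝ), x ^ (-q-2) * Real.exp (-(1/t) * x ^ (-γ)) := by
    rw [← integral_const_mul]
    refine setIntegral_congr_fun measurableSet_Ioi (fun x hx => ?_)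
    have hx0 : (0:ℝ) < x := hx
    have he : -(1 / (x ^ γ * t)) = -(1/t) * x ^ (-γ) := by
      rw [Real.rpow_neg hx0.le]
      field_simp
    have hxx : x ^ (-q-2) = x ^ (η-1) * x ^ (-(γ*μ)-1) := by
      rw [← Real.rpow_add hx0]
      congr 1
      rw [hqdef]; ring
    rw [he, hxx]; ring
  rw [lhs_eq, sub, key]
  have hA : (q+1)/γ = (1-η)/γ + μ := by
    rw [hqdef]; field_simp; ring
  have hB : (1/t) ^ (-(q+1)/γ) = t ^ ((1-η)/γ) * t ^ μ := by
    rw [one_div, ← Real.rpow_neg_one t, ← Real.rpow_mul ht.le, ← Real.rpow_add ht]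
    congr 1
    rw [hqdef]; field_simp; ring
  rw [hA, hB]
  field_simp
end

section
/- Fix μ > 0, n ≥ 1, parameters γ₁,…,γₙ > 0 and signs ε₁,…,εₙ ∈ {+1,−1}, and set K_j(x,t) = Q̃(x;t,μ,γ_j) if ε_j = +1 and K_j(x,t) = Q̃₋(x;t,μ,γ_j) if ε_j = −1. Define the n-fold composed density recursively by q₁(x,t) = K₁(x,t) and q_{k+1}(x,t) = ∫₀^∞ q_k(x,s) K_{k+1}(s,t) ds. Then for every t > 0 and every real η satisfying η > 1 − γ_j μ for each j with ε_j = +1 and η < 1 + γ_j μ for each j with ε_j = −1, one has ∫₀^∞ x^(η−1) q_n(x,t) dx = t^(η−1) ∏_{j=1}^n (φ_j / Γ(μ)), where φ_j = Γ((η−1)/γ_j + μ) if ε_j = +1 and φ_j = Γ((1−η)/γ_j + μ) if ε_j = −1; equivalently, this Mellin transform equals ∏_{j=1}^n ∫₀^∞ x^(η−1) K_j(x, t^(1/n)) dx, so the n-fold composition of the processes has the same distribution as the product of the n independent processes each evaluated at t^(1/n). -/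
open MeasureTheory

/-- The generalized Gamma density in scale form:
`Q̃(x;t,μ,γ) = γ (x/t)^(μγ−1) e^(−(x/t)^γ) / (t Γ(μ))`. -/
noncomputable def Qt (x t μ γ : ℝ) : ℝ :=
  γ * (x / t) ^ (μ * γ - 1) * Real.exp (-((x / t) ^ γ)) / (t * Real.Gamma μ)

/-- The inverse generalized Gamma density in scale form:
`Q̃₋(x;t,μ,γ) = γ (x/t)^(−μγ−1) e^(−(t/x)^γ) / (t Γ(μ))`. -/
noncomputable def Qtm (x t μ γ : ℝ) : ℝ :=
  γ * (x / t) ^ (-(μ * γ) - 1) * Real.exp (-((t / x) ^ γ)) / (t * Real.Gamma μ)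

/-- The `(k+1)`-fold composed density built from the kernels `K 0, K 1, …, K k`:
`q₁ = K 0` and `q_{k+1}(x,t) = ∫₀^∞ q_k(x,s) K (k+1) (s,t) ds`. -/
noncomputable def comp (K : ℕ → ℝ → ℝ → ℝ) : ℕ → ℝ → ℝ → ℝ
  | 0 => K 0
  | (k + 1) => fun x t => ∫ s in Set.Ioi (0:ℝ), comp K k x s * K (k + 1) s t

section Aux

open Real Set

lemma measurable_cpow2 : Measurable fun q : ℂ × ℂ => q.1 ^ q.2 := by
  have h : (fun q : ℂ × ℂ => q.1 ^ q.2) = fun q =>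
      if q.1 = 0 then (if q.2 = 0 then 1 else 0) else Complex.exp (Complex.log q.1 * q.2) := by
    funext q; rw [Complex.cpow_def]
  rw [h]
  refine Measurable.ite (measurableSet_eq_fun measurable_fst measurable_const) ?_ ?_
  · exact Measurable.ite (measurableSet_eq_fun measurable_snd measurable_const)
      measurable_const measurable_const
  · exact Complex.measurable_exp.comp
      ((Complex.measurable_log.comp measurable_fst).mul measurable_snd)

lemma measurable_rpow2 : Measurable fun p : ℝ × ℝ => p.1 ^ p.2 := by
  have h : (fun p : ℝ × ℝ => p.1 ^ p.2) = fun p => ((p.1 : ℂ) ^ (p.2 : ℂ)).re := rfl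
  rw [h]
  exact Complex.measurable_re.comp (measurable_cpow2.comp
    ((Complex.measurable_ofReal.comp measurable_fst).prodMk
      (Complex.measurable_ofReal.comp measurable_snd)))

lemma core_int_pos {p q : ℝ} (hp : 0 < p) (hq : -1 < q) :
    IntegrableOn (fun x : ℝ => x ^ q * Real.exp (-x ^ p)) (Set.Ioi 0) := by
  have hs : 0 < (q + 1) / p := div_pos (by linarith) hp
  have h := (integrableOn_Ioi_comp_rpow_iff'
      (fun y => Real.exp (-y) * y ^ ((q + 1) / p - 1)) hp.ne').mpr
      (Real.GammaIntegral_convergent hs)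
  refine h.congr_fun (fun x hx => ?_) measurableSet_Ioi
  have hx0 : (0:ℝ) < x := hx
  beta_reduce
  rw [smul_eq_mul, ← Real.rpow_mul hx0.le, mul_comm (Real.exp _), ← mul_assoc,
    ← Real.rpow_add hx0]
  congr 2
  field_simp
  ring

lemma core_int {p q : ℝ} (hp : p ≠ 0) (hq : 0 < (q + 1) / p) :
    IntegrableOn (fun x : ℝ => x ^ q * Real.exp (-x ^ p)) (Set.Ioi 0) := by
  rcases hp.lt_or_gt with hneg | hpos
  · have hq1 : q + 1 < 0 := by
      have h1 := mul_neg_of_pos_of_neg hq hneg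
      rwa [div_mul_cancel₀ _ hp] at h1
    have h2 : -1 < -q - 2 := by linarith
    have h := (integrableOn_Ioi_comp_rpow_iff'
        (fun y : ℝ => y ^ (-q - 2) * Real.exp (-y ^ (-p))) (by norm_num : (-1:ℝ) ≠ 0)).mpr
        (core_int_pos (by linarith) h2)
    refine h.congr_fun (fun x hx => ?_) measurableSet_Ioi
    have hx0 : (0:ℝ) < x := hx
    beta_reduce
    rw [smul_eq_mul, ← Real.rpow_mul hx0.le, ← Real.rpow_mul hx0.le, ← mul_assoc,
      ← Real.rpow_add hx0]
    norm_num
  · have hq' : -1 < q := by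
      have h1 := mul_pos hq hpos
      rw [div_mul_cancel₀ _ hp] at h1
      linarith
    exact core_int_pos hpos hq'

lemma core_val {p q : ℝ} (hp : p ≠ 0) (hq : 0 < (q + 1) / p) :
    ∫ x in Set.Ioi (0:ℝ), x ^ q * Real.exp (-x ^ p) = |p|⁻¹ * Real.Gamma ((q + 1) / p) := by
  rcases hp.lt_or_gt with hneg | hpos
  · have hq1 : q + 1 < 0 := by
      have h1 := mul_neg_of_pos_of_neg hq hneg
      rwa [div_mul_cancel₀ _ hp] at h1
    have h2 : -1 < -q - 2 := by linarith
    have key := integral_comp_rpow_Ioi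
      (fun y : ℝ => y ^ (-q - 2) * Real.exp (-y ^ (-p))) (by norm_num : (-1:ℝ) ≠ 0)
    have heq : ∀ x ∈ Set.Ioi (0:ℝ),
        (|(-1:ℝ)| * x ^ ((-1:ℝ) - 1)) • ((x ^ (-1:ℝ)) ^ (-q - 2) * Real.exp (-(x ^ (-1:ℝ)) ^ (-p)))
          = x ^ q * Real.exp (-x ^ p) := by
      intro x hx
      have hx0 : (0:ℝ) < x := hx
      rw [smul_eq_mul, ← Real.rpow_mul hx0.le, ← Real.rpow_mul hx0.le, abs_neg, abs_one,
        one_mul, ← mul_assoc, ← Real.rpow_add hx0]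
      norm_num
    rw [← setIntegral_congr_fun measurableSet_Ioi heq, key,
      integral_rpow_mul_exp_neg_rpow (by linarith : 0 < -p) h2]
    rw [abs_of_neg hneg]
    congr 1
    · rw [one_div]
    · congr 1
      rw [show -q - 2 + 1 = -(q + 1) by ring, neg_div_neg_eq]
  · have hq' : -1 < q := by
      have h1 := mul_pos hq hpos
      rw [div_mul_cancel₀ _ hp] at h1
      linarith
    rw [integral_rpow_mul_exp_neg_rpow hpos hq', abs_of_pos hpos, one_div]

variable {μ γ t η : ℝ}

lemma Qt_eq (ht : 0 < t) :
    ∀ x ∈ Set.Ioi (0:ℝ), x ^ (η - 1) * Qt x t μ γ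
      = (t ^ (η - 1) * γ / (t * Real.Gamma μ))
        * ((t⁻¹ * x) ^ (η + μ * γ - 2) * Real.exp (-((t⁻¹ * x) ^ γ))) := by
  intro x hx
  have hx0 : (0:ℝ) < x := hx
  have hy : (0:ℝ) < t⁻¹ * x := by positivity
  have hdiv : x / t = t⁻¹ * x := by rw [div_eq_inv_mul]
  have e1 : x ^ (η - 1) = t ^ (η - 1) * (t⁻¹ * x) ^ (η - 1) := by
    rw [← Real.mul_rpow ht.le hy.le, mul_inv_cancel_left₀ ht.ne']
  rw [Qt, hdiv, e1, show η + μ * γ - 2 = (η - 1) + (μ * γ - 1) by ring,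
    Real.rpow_add hy]
  ring

lemma Qtm_eq (ht : 0 < t) :
    ∀ x ∈ Set.Ioi (0:ℝ), x ^ (η - 1) * Qtm x t μ γ
      = (t ^ (η - 1) * γ / (t * Real.Gamma μ))
        * ((t⁻¹ * x) ^ (η - μ * γ - 2) * Real.exp (-((t⁻¹ * x) ^ (-γ)))) := by
  intro x hx
  have hx0 : (0:ℝ) < x := hx
  have hy : (0:ℝ) < t⁻¹ * x := by positivity
  have hdiv : x / t = t⁻¹ * x := by rw [div_eq_inv_mul]
  have e1 : x ^ (η - 1) = t ^ (η - 1) * (t⁻¹ * x) ^ (η - 1) := by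
    rw [← Real.mul_rpow ht.le hy.le, mul_inv_cancel_left₀ ht.ne']
  have e2 : (t / x) ^ γ = (t⁻¹ * x) ^ (-γ) := by
    rw [← inv_div x t, hdiv, Real.inv_rpow hy.le, ← Real.rpow_neg hy.le]
  rw [Qtm, hdiv, e1, e2, show η - μ * γ - 2 = (η - 1) + (-(μ * γ) - 1) by ring,
    Real.rpow_add hy]
  ring

lemma mellin_Qt (hμ : 0 < μ) (hγ : 0 < γ) (ht : 0 < t) (hη : 0 < (η - 1) / γ + μ) :
    IntegrableOn (fun x => x ^ (η - 1) * Qt x t μ γ) (Set.Ioi 0) ∧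
    ∫ x in Set.Ioi (0:ℝ), x ^ (η - 1) * Qt x t μ γ
      = t ^ (η - 1) * (Real.Gamma ((η - 1) / γ + μ) / Real.Gamma μ) := by
  have haux : (η + μ * γ - 2 + 1) / γ = (η - 1) / γ + μ := by field_simp; ring
  have hcore_v := core_val (p := γ) (q := η + μ * γ - 2) hγ.ne' (by rw [haux]; exact hη)
  have hint : IntegrableOn
      (fun x => (t ^ (η - 1) * γ / (t * Real.Gamma μ))
        * ((t⁻¹ * x) ^ (η + μ * γ - 2) * Real.exp (-((t⁻¹ * x) ^ γ)))) (Set.Ioi 0) := by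
    refine Integrable.const_mul ?_ _
    have hcore_i := core_int (p := γ) (q := η + μ * γ - 2) hγ.ne' (by rw [haux]; exact hη)
    have := (integrableOn_Ioi_comp_mul_left_iff
      (fun y : ℝ => y ^ (η + μ * γ - 2) * Real.exp (-y ^ γ)) 0 (inv_pos.mpr ht)).mpr
      (by rwa [mul_zero])
    exact this
  constructor
  · exact (hint.congr_fun (fun x hx => (Qt_eq ht x hx).symm) measurableSet_Ioi)
  · rw [setIntegral_congr_fun measurableSet_Ioi (Qt_eq ht), integral_const_mul,
      integral_comp_mul_left_Ioi
        (fun y : ℝ => y ^ (η + μ * γ - 2) * Real.exp (-y ^ γ)) 0 (inv_pos.mpr ht),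
      mul_zero, smul_eq_mul, inv_inv, hcore_v, haux, abs_of_pos hγ]
    have hΓ : Real.Gamma μ ≠ 0 := (Real.Gamma_pos_of_pos hμ).ne'
    field_simp

lemma mellin_Qtm (hμ : 0 < μ) (hγ : 0 < γ) (ht : 0 < t) (hη : 0 < (1 - η) / γ + μ) :
    IntegrableOn (fun x => x ^ (η - 1) * Qtm x t μ γ) (Set.Ioi 0) ∧
    ∫ x in Set.Ioi (0:ℝ), x ^ (η - 1) * Qtm x t μ γ
      = t ^ (η - 1) * (Real.Gamma ((1 - η) / γ + μ) / Real.Gamma μ) := by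
  have haux : (η - μ * γ - 2 + 1) / (-γ) = (1 - η) / γ + μ := by
    rw [div_eq_iff (neg_ne_zero.mpr hγ.ne')]; field_simp; ring
  have hcore_v := core_val (p := -γ) (q := η - μ * γ - 2)
    (neg_ne_zero.mpr hγ.ne') (by rw [haux]; exact hη)
  have hint : IntegrableOn
      (fun x => (t ^ (η - 1) * γ / (t * Real.Gamma μ))
        * ((t⁻¹ * x) ^ (η - μ * γ - 2) * Real.exp (-((t⁻¹ * x) ^ (-γ))))) (Set.Ioi 0) := by
    refine Integrable.const_mul ?_ _
    have hcore_i := core_int (p := -γ) (q := η - μ * γ - 2)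
      (neg_ne_zero.mpr hγ.ne') (by rw [haux]; exact hη)
    have := (integrableOn_Ioi_comp_mul_left_iff
      (fun y : ℝ => y ^ (η - μ * γ - 2) * Real.exp (-y ^ (-γ))) 0 (inv_pos.mpr ht)).mpr
      (by rwa [mul_zero])
    exact this
  constructor
  · exact (hint.congr_fun (fun x hx => (Qtm_eq ht x hx).symm) measurableSet_Ioi)
  · rw [setIntegral_congr_fun measurableSet_Ioi (Qtm_eq ht), integral_const_mul,
      integral_comp_mul_left_Ioi
        (fun y : ℝ => y ^ (η - μ * γ - 2) * Real.exp (-y ^ (-γ))) 0 (inv_pos.mpr ht),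
      mul_zero, smul_eq_mul, inv_inv, hcore_v, haux, abs_neg, abs_of_pos hγ]
    have hΓ : Real.Gamma μ ≠ 0 := (Real.Gamma_pos_of_pos hμ).ne'
    field_simp

lemma measurable_Qt (μ γ : ℝ) : Measurable fun p : ℝ × ℝ => Qt p.1 p.2 μ γ := by
  unfold Qt
  have hd : Measurable fun p : ℝ × ℝ => p.1 / p.2 := measurable_fst.div measurable_snd
  have h1 : Measurable fun p : ℝ × ℝ => (p.1 / p.2) ^ (μ * γ - 1) :=
    measurable_rpow2.comp (hd.prodMk measurable_const)
  have h2 : Measurable fun p : ℝ × ℝ => (p.1 / p.2) ^ γ :=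
    measurable_rpow2.comp (hd.prodMk measurable_const)
  exact ((measurable_const.mul h1).mul (Real.measurable_exp.comp h2.neg)).div
    (measurable_snd.mul measurable_const)

lemma measurable_Qtm (μ γ : ℝ) : Measurable fun p : ℝ × ℝ => Qtm p.1 p.2 μ γ := by
  unfold Qtm
  have hd : Measurable fun p : ℝ × ℝ => p.1 / p.2 := measurable_fst.div measurable_snd
  have hd' : Measurable fun p : ℝ × ℝ => p.2 / p.1 := measurable_snd.div measurable_fst
  have h1 : Measurable fun p : ℝ × ℝ => (p.1 / p.2) ^ (-(μ * γ) - 1) :=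
    measurable_rpow2.comp (hd.prodMk measurable_const)
  have h2 : Measurable fun p : ℝ × ℝ => (p.2 / p.1) ^ γ :=
    measurable_rpow2.comp (hd'.prodMk measurable_const)
  exact ((measurable_const.mul h1).mul (Real.measurable_exp.comp h2.neg)).div
    (measurable_snd.mul measurable_const)

lemma Qt_nonneg (hγ : 0 < γ) (hμ : 0 < μ) {x : ℝ} (hx : 0 < x) (ht : 0 < t) :
    0 ≤ Qt x t μ γ := by
  unfold Qt
  have hΓ : 0 < Real.Gamma μ := Real.Gamma_pos_of_pos hμ
  positivity

lemma Qtm_nonneg (hγ : 0 < γ) (hμ : 0 < μ) {x : ℝ} (hx : 0 < x) (ht : 0 < t) :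
    0 ≤ Qtm x t μ γ := by
  unfold Qtm
  have hΓ : 0 < Real.Gamma μ := Real.Gamma_pos_of_pos hμ
  positivity

end Aux

/-- the Mellin transform of the `n`-fold composition of generalized Gamma
(or inverse generalized Gamma, according to the signs `ε`) processes equals
`t^(η−1) ∏ φ_j / Γ(μ)`, which is also the product of the Mellin transforms of the
`n` individual kernels evaluated at time `t^(1/n)`. -/
theorem stmt_6 (μ : ℝ) (hμ : 0 < μ) (n : ℕ) (hn : 1 ≤ n)
    (γ : ℕ → ℝ) (hγ : ∀ j < n, 0 < γ j)
    (ε : ℕ → Bool)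
    (K : ℕ → ℝ → ℝ → ℝ)
    (hK : ∀ j, K j = fun x t => if ε j then Qt x t μ (γ j) else Qtm x t μ (γ j))
    (t η : ℝ) (ht : 0 < t)
    (hη₁ : ∀ j < n, ε j = true → 1 - γ j * μ < η)
    (hη₂ : ∀ j < n, ε j = false → η < 1 + γ j * μ) :
    (∫ x in Set.Ioi (0:ℝ), x ^ (η - 1) * comp K (n - 1) x t)
      = t ^ (η - 1) * ∏ j ∈ Finset.range n,
          ((if ε j then Real.Gamma ((η - 1) / γ j + μ)
            else Real.Gamma ((1 - η) / γ j + μ)) / Real.Gamma μ)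
    ∧ (∫ x in Set.Ioi (0:ℝ), x ^ (η - 1) * comp K (n - 1) x t)
        = ∏ j ∈ Finset.range n,
            ∫ x in Set.Ioi (0:ℝ), x ^ (η - 1) * K j x (t ^ ((1:ℝ) / n)) := by
  set c : ℕ → ℝ := fun j =>
    ((if ε j then Real.Gamma ((η - 1) / γ j + μ)
      else Real.Gamma ((1 - η) / γ j + μ)) / Real.Gamma μ) with hc_def
  have hΓμ : 0 < Real.Gamma μ := Real.Gamma_pos_of_pos hμ
  -- positivity of the Gamma arguments
  have hcond₁ : ∀ j < n, ε j = true → 0 < (η - 1) / γ j + μ := by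
    intro j hj hε
    have hg := hγ j hj
    have h := hη₁ j hj hε
    have h2 : -μ * γ j < η - 1 := by nlinarith
    have := (lt_div_iff₀ hg).mpr h2
    linarith
  have hcond₂ : ∀ j < n, ε j = false → 0 < (1 - η) / γ j + μ := by
    intro j hj hε
    have hg := hγ j hj
    have h := hη₂ j hj hε
    have h2 : -μ * γ j < 1 - η := by nlinarith
    have := (lt_div_iff₀ hg).mpr h2
    linarith
  have hcpos : ∀ j < n, 0 < c j := by
    intro j hj
    rw [hc_def]
    cases hε : ε j with
    | true =>
      simp only [hε, if_true]
      exact div_pos (Real.Gamma_pos_of_pos (hcond₁ j hj hε)) hΓμ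
    | false =>
      simp only [hε, Bool.false_eq_true, if_false]
      exact div_pos (Real.Gamma_pos_of_pos (hcond₂ j hj hε)) hΓμ
  -- Mellin transform of the individual kernels
  have mellinK : ∀ j < n, ∀ s : ℝ, 0 < s →
      MeasureTheory.IntegrableOn (fun x => x ^ (η - 1) * K j x s) (Set.Ioi 0) ∧
      ∫ x in Set.Ioi (0:ℝ), x ^ (η - 1) * K j x s = s ^ (η - 1) * c j := by
    intro j hj s hs
    rw [hK j, hc_def]
    cases hε : ε j with
    | true =>
      simp only [hε, if_true]
      exact mellin_Qt hμ (hγ j hj) hs (hcond₁ j hj hε)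
    | false =>
      simp only [hε, Bool.false_eq_true, if_false]
      exact mellin_Qtm hμ (hγ j hj) hs (hcond₂ j hj hε)
  have hKnn : ∀ j < n, ∀ x s : ℝ, 0 < x → 0 < s → 0 ≤ K j x s := by
    intro j hj x s hx hs
    rw [hK j]
    cases hε : ε j with
    | true =>
      simp only [hε, if_true]
      exact Qt_nonneg (hγ j hj) hμ hx hs
    | false =>
      simp only [hε, Bool.false_eq_true, if_false]
      exact Qtm_nonneg (hγ j hj) hμ hx hs
  have hKm : ∀ j, Measurable fun p : ℝ × ℝ => K j p.1 p.2 := by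
    intro j
    rw [hK j]
    cases hε : ε j with
    | true =>
      simp only [hε, if_true]
      exact measurable_Qt μ (γ j)
    | false =>
      simp only [hε, Bool.false_eq_true, if_false]
      exact measurable_Qtm μ (γ j)
  -- the main induction
  have main : ∀ k, k + 1 ≤ n →
      (∀ x s : ℝ, 0 < x → 0 < s → 0 ≤ comp K k x s) ∧
      Measurable (fun p : ℝ × ℝ => comp K k p.1 p.2) ∧
      ∀ s : ℝ, 0 < s →
        ∫⁻ x in Set.Ioi (0:ℝ), ENNReal.ofReal (x ^ (η - 1) * comp K k x s)
          = ENNReal.ofReal (s ^ (η - 1) * ∏ j ∈ Finset.range (k + 1), c j) := by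
    intro k
    induction k with
    | zero =>
      intro h1
      have h0 : 0 < n := hn
      refine ⟨fun x s hx hs => hKnn 0 h0 x s hx hs, hKm 0, fun s hs => ?_⟩
      obtain ⟨hi, hv⟩ := mellinK 0 h0 s hs
      have hnn : 0 ≤ᵐ[volume.restrict (Set.Ioi (0:ℝ))] fun x => x ^ (η - 1) * K 0 x s :=
        (MeasureTheory.ae_restrict_iff' measurableSet_Ioi).mpr (Filter.Eventually.of_forall
          fun x hx => mul_nonneg (Real.rpow_nonneg (le_of_lt hx) _) (hKnn 0 h0 x s hx hs))
      show ∫⁻ x in Set.Ioi (0:ℝ), ENNReal.ofReal (x ^ (η - 1) * K 0 x s) = _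
      rw [← MeasureTheory.ofReal_integral_eq_lintegral_ofReal hi hnn, hv,
        Finset.prod_range_one]
    | succ k ih =>
      intro hk2
      have hk1 : k + 1 ≤ n := by omega
      obtain ⟨Hnn, Hm, HL⟩ := ih hk1
      have hkn : k + 1 < n := by omega
      have hcomp : ∀ x u : ℝ, comp K (k + 1) x u
          = ∫ s in Set.Ioi (0:ℝ), comp K k x s * K (k + 1) s u := fun x u => rfl
      -- nonnegativity
      have Nnn : ∀ x u : ℝ, 0 < x → 0 < u → 0 ≤ comp K (k + 1) x u := by
        intro x u hx hu
        rw [hcomp]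
        exact MeasureTheory.setIntegral_nonneg measurableSet_Ioi fun s hs =>
          mul_nonneg (Hnn x s hx hs) (hKnn (k + 1) hkn s u hs hu)
      -- measurability
      have Nm : Measurable fun p : ℝ × ℝ => comp K (k + 1) p.1 p.2 := by
        have hsm : MeasureTheory.StronglyMeasurable
            fun q : (ℝ × ℝ) × ℝ => comp K k q.1.1 q.2 * K (k + 1) q.2 q.1.2 :=
          ((Hm.comp (measurable_fst.fst.prodMk measurable_snd)).mul
            ((hKm (k + 1)).comp (measurable_snd.prodMk measurable_fst.snd))).stronglyMeasurable
        exact (hsm.integral_prod_right'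
          (ν := volume.restrict (Set.Ioi (0:ℝ)))).measurable
      refine ⟨Nnn, Nm, fun u hu => ?_⟩
      -- the double-integral function
      set F : ℝ → ℝ → ENNReal := fun x s =>
        ENNReal.ofReal (x ^ (η - 1) * (comp K k x s * K (k + 1) s u)) with hF_def
      have hrm : Measurable fun p : ℝ × ℝ => p.1 ^ (η - 1) :=
        measurable_rpow2.comp (measurable_fst.prodMk measurable_const)
      have hFm : Measurable (Function.uncurry F) := by
        apply ENNReal.measurable_ofReal.comp
        exact hrm.mul (Hm.mul ((hKm (k + 1)).comp (measurable_snd.prodMk measurable_const)))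
      have hqm : ∀ s : ℝ, Measurable fun x => comp K k x s :=
        fun s => Hm.comp (measurable_id.prodMk measurable_const)
      have hqm' : ∀ x : ℝ, Measurable fun s => comp K k x s :=
        fun x => Hm.comp (measurable_const.prodMk measurable_id)
      have hKm1 : ∀ s : ℝ, Measurable fun x : ℝ => K (k + 1) x s :=
        fun s => (hKm (k + 1)).comp (measurable_id.prodMk measurable_const)
      have hKm2 : ∀ x : ℝ, Measurable fun s : ℝ => K (k + 1) x s :=
        fun x => (hKm (k + 1)).comp (measurable_const.prodMk measurable_id)
      have hmx : ∀ s : ℝ, Measurable fun x : ℝ => ENNReal.ofReal (x ^ (η - 1) * comp K k x s) :=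
        fun s => ENNReal.measurable_ofReal.comp
          ((measurable_rpow2.comp (measurable_id.prodMk measurable_const)).mul (hqm s))
      have hms : Measurable fun s : ℝ => ENNReal.ofReal (s ^ (η - 1) * K (k + 1) s u) :=
        ENNReal.measurable_ofReal.comp
          ((measurable_rpow2.comp (measurable_id.prodMk measurable_const)).mul (hKm1 u))
      -- swap
      have hswap : ∫⁻ x in Set.Ioi (0:ℝ), ∫⁻ s in Set.Ioi (0:ℝ), F x s
          = ∫⁻ s in Set.Ioi (0:ℝ), ∫⁻ x in Set.Ioi (0:ℝ), F x s :=
        MeasureTheory.lintegral_lintegral_swap hFm.aemeasurable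
      set P : ℝ := ∏ j ∈ Finset.range (k + 1), c j with hP_def
      have hPnn : 0 ≤ P :=
        Finset.prod_nonneg fun j hj => (hcpos j (by
          have := Finset.mem_range.mp hj; omega)).le
      -- inner x-integral for fixed s > 0
      have hinner : ∀ s ∈ Set.Ioi (0:ℝ), ∫⁻ x in Set.Ioi (0:ℝ), F x s
          = ENNReal.ofReal P * ENNReal.ofReal (s ^ (η - 1) * K (k + 1) s u) := by
        intro s hs
        have hs0 : (0:ℝ) < s := hs
        have e1 : ∫⁻ x in Set.Ioi (0:ℝ), F x s
            = ∫⁻ x in Set.Ioi (0:ℝ),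
                ENNReal.ofReal (x ^ (η - 1) * comp K k x s) * ENNReal.ofReal (K (k + 1) s u) := by
          refine MeasureTheory.setLIntegral_congr_fun measurableSet_Ioi
            (fun x hx => ?_)
          rw [hF_def, ← ENNReal.ofReal_mul
            (mul_nonneg (Real.rpow_nonneg (le_of_lt hx) _) (Hnn x s hx hs0))]
          congr 1
          ring
        rw [e1, MeasureTheory.lintegral_mul_const _ (hmx s), HL s hs0]
        rw [ENNReal.ofReal_mul (Real.rpow_nonneg hs0.le _),
          ENNReal.ofReal_mul (Real.rpow_nonneg hs0.le _)]
        ring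
      -- the s-integral
      have hRHS : ∫⁻ s in Set.Ioi (0:ℝ), ∫⁻ x in Set.Ioi (0:ℝ), F x s
          = ENNReal.ofReal (u ^ (η - 1) * ∏ j ∈ Finset.range (k + 2), c j) := by
        rw [MeasureTheory.setLIntegral_congr_fun measurableSet_Ioi
          hinner]
        obtain ⟨Ki, Kv⟩ := mellinK (k + 1) hkn u hu
        have hknn : 0 ≤ᵐ[volume.restrict (Set.Ioi (0:ℝ))]
            fun s => s ^ (η - 1) * K (k + 1) s u :=
          (MeasureTheory.ae_restrict_iff' measurableSet_Ioi).mpr (Filter.Eventually.of_forall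
            fun s hs => mul_nonneg (Real.rpow_nonneg (le_of_lt hs) _)
              (hKnn (k + 1) hkn s u hs hu))
        rw [MeasureTheory.lintegral_const_mul _ hms,
          ← MeasureTheory.ofReal_integral_eq_lintegral_ofReal Ki hknn, Kv,
          ← ENNReal.ofReal_mul hPnn, Finset.prod_range_succ]
        congr 1
        ring
      -- a.e. finiteness of the inner s-integral
      have hxmeas : Measurable fun x => ∫⁻ s in Set.Ioi (0:ℝ), F x s :=
        Measurable.lintegral_prod_right' (f := Function.uncurry F) hFm
      have hfin : ∀ᵐ x ∂(volume.restrict (Set.Ioi (0:ℝ))),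
          (∫⁻ s in Set.Ioi (0:ℝ), F x s) < ⊤ := by
        refine MeasureTheory.ae_lt_top hxmeas ?_
        rw [hswap, hRHS]
        exact ENNReal.ofReal_ne_top
      -- a.e. identity reducing the (k+1)-fold integral to the double integral
      have key : ∀ᵐ x ∂(volume.restrict (Set.Ioi (0:ℝ))),
          ENNReal.ofReal (x ^ (η - 1) * comp K (k + 1) x u)
            = ∫⁻ s in Set.Ioi (0:ℝ), F x s := by
        filter_upwards [hfin, MeasureTheory.ae_restrict_mem measurableSet_Ioi] with x hxfin hx
        have hx0 : (0:ℝ) < x := hx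
        have hgm : Measurable fun s => comp K k x s * K (k + 1) s u :=
          (hqm' x).mul (hKm1 u)
        have hgm' : Measurable fun s : ℝ => ENNReal.ofReal (comp K k x s * K (k + 1) s u) :=
          ENNReal.measurable_ofReal.comp hgm
        have hgnn : 0 ≤ᵐ[volume.restrict (Set.Ioi (0:ℝ))]
            fun s => comp K k x s * K (k + 1) s u :=
          (MeasureTheory.ae_restrict_iff' measurableSet_Ioi).mpr (Filter.Eventually.of_forall
            fun s hs => mul_nonneg (Hnn x s hx0 hs) (hKnn (k + 1) hkn s u hs hu))
        have hpull : ∫⁻ s in Set.Ioi (0:ℝ), F x s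
            = ENNReal.ofReal (x ^ (η - 1))
              * ∫⁻ s in Set.Ioi (0:ℝ), ENNReal.ofReal (comp K k x s * K (k + 1) s u) := by
          rw [← MeasureTheory.lintegral_const_mul _ hgm']
          refine MeasureTheory.lintegral_congr fun s => ?_
          rw [hF_def, ← ENNReal.ofReal_mul (Real.rpow_nonneg hx0.le _)]
        have hxr : ENNReal.ofReal (x ^ (η - 1)) ≠ 0 := by
          simp [ENNReal.ofReal_eq_zero, not_le, Real.rpow_pos_of_pos hx0]
        have hfin' : (∫⁻ s in Set.Ioi (0:ℝ),
            ENNReal.ofReal (comp K k x s * K (k + 1) s u)) < ⊤ := by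
          by_contra hcon
          push_neg at hcon
          rw [hpull, top_le_iff.mp hcon, ENNReal.mul_top hxr] at hxfin
          exact absurd hxfin (lt_irrefl ⊤)
        have hint : MeasureTheory.IntegrableOn
            (fun s => comp K k x s * K (k + 1) s u) (Set.Ioi 0) := by
          constructor
          · exact hgm.aestronglyMeasurable
          · exact (MeasureTheory.hasFiniteIntegral_iff_ofReal hgnn).mpr hfin'
        have hor : ENNReal.ofReal (comp K (k + 1) x u)
            = ∫⁻ s in Set.Ioi (0:ℝ), ENNReal.ofReal (comp K k x s * K (k + 1) s u) := by
          rw [hcomp]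
          exact MeasureTheory.ofReal_integral_eq_lintegral_ofReal hint hgnn
        rw [ENNReal.ofReal_mul (Real.rpow_nonneg hx0.le _), hor, hpull]
      calc ∫⁻ x in Set.Ioi (0:ℝ), ENNReal.ofReal (x ^ (η - 1) * comp K (k + 1) x u)
          = ∫⁻ x in Set.Ioi (0:ℝ), ∫⁻ s in Set.Ioi (0:ℝ), F x s :=
            MeasureTheory.lintegral_congr_ae key
        _ = ENNReal.ofReal (u ^ (η - 1) * ∏ j ∈ Finset.range (k + 2), c j) := by
            rw [hswap, hRHS]
  -- assemble the final statement
  obtain ⟨Nnn, Nm, NL⟩ := main (n - 1) (by omega)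
  have hmel := NL t ht
  rw [Nat.sub_add_cancel hn] at hmel
  have hprodnn : 0 ≤ ∏ j ∈ Finset.range n, c j :=
    Finset.prod_nonneg fun j hj => (hcpos j (Finset.mem_range.mp hj)).le
  have hnn_ae : 0 ≤ᵐ[volume.restrict (Set.Ioi (0:ℝ))]
      fun x => x ^ (η - 1) * comp K (n - 1) x t :=
    (MeasureTheory.ae_restrict_iff' measurableSet_Ioi).mpr (Filter.Eventually.of_forall
      fun x hx => mul_nonneg (Real.rpow_nonneg (le_of_lt hx) _) (Nnn x t hx ht))
  have hmeas : MeasureTheory.AEStronglyMeasurable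
      (fun x => x ^ (η - 1) * comp K (n - 1) x t) (volume.restrict (Set.Ioi (0:ℝ))) :=
    ((measurable_rpow2.comp (measurable_id.prodMk measurable_const)).mul
      (Nm.comp (measurable_id.prodMk measurable_const))).aestronglyMeasurable
  have hmain : (∫ x in Set.Ioi (0:ℝ), x ^ (η - 1) * comp K (n - 1) x t)
      = t ^ (η - 1) * ∏ j ∈ Finset.range n, c j := by
    rw [MeasureTheory.integral_eq_lintegral_of_nonneg_ae hnn_ae hmeas, hmel,
      ENNReal.toReal_ofReal (mul_nonneg (Real.rpow_nonneg ht.le _) hprodnn)]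
  refine ⟨hmain, ?_⟩
  rw [hmain]
  have htn : (0:ℝ) < t ^ ((1:ℝ) / n) := Real.rpow_pos_of_pos ht _
  rw [Finset.prod_congr rfl fun j hj => (mellinK j (Finset.mem_range.mp hj) _ htn).2,
    Finset.prod_mul_distrib, Finset.prod_const, Finset.card_range]
  congr 1
  rw [← Real.rpow_natCast ((t ^ ((1:ℝ) / n)) ^ (η - 1)) n,
    ← Real.rpow_mul (Real.rpow_nonneg ht.le _), ← Real.rpow_mul ht.le]
  congr 1
  have hn0 : (n:ℝ) ≠ 0 := Nat.cast_ne_zero.mpr (by omega)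
  field_simp
end

section
/- For every γ > 0, μ₁ > 0, μ₂ > 0, t > 0 and x > 0, the density of the composition of a generalized Gamma process with an independent inverse generalized Gamma process has the explicit closed form ∫₀^∞ γ (x/s)^(μ₁γ−1) e^(−(x/s)^γ) / (s Γ(μ₁)) · γ (s/t)^(−μ₂γ−1) e^(−(t/s)^γ) / (t Γ(μ₂)) ds = γ x^(γμ₁−1) t^(γμ₂) Γ(μ₁+μ₂) / ( (x^γ + t^γ)^(μ₁+μ₂) Γ(μ₁) Γ(μ₂) ). -/
open MeasureTheory

lemma exp_rpow_aux (z w : ℝ) : Real.exp z ^ w = Real.exp (z * w) := by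
  rw [Real.rpow_def_of_pos (Real.exp_pos z), Real.log_exp]

/-- the density of the composition `G̃¹_γ(G̃²_{−γ}(t))` of a generalized
Gamma process with an independent inverse generalized Gamma process satisfies
`∫₀^∞ Q̃(x;s,μ₁,γ) Q̃₋(s;t,μ₂,γ) ds
  = γ x^(γμ₁−1) t^(γμ₂) Γ(μ₁+μ₂) / ((x^γ + t^γ)^(μ₁+μ₂) Γ(μ₁) Γ(μ₂))`. -/
theorem stmt_7 (γ μ₁ μ₂ t x : ℝ) (hγ : 0 < γ) (hμ₁ : 0 < μ₁) (hμ₂ : 0 < μ₂)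
    (ht : 0 < t) (hx : 0 < x) :
    (∫ s in Set.Ioi (0:ℝ),
        (γ * (x / s) ^ (μ₁ * γ - 1) * Real.exp (-((x / s) ^ γ)) / (s * Real.Gamma μ₁)) *
          (γ * (s / t) ^ (-(μ₂ * γ) - 1) * Real.exp (-((t / s) ^ γ)) / (t * Real.Gamma μ₂)))
      = γ * x ^ (γ * μ₁ - 1) * t ^ (γ * μ₂) * Real.Gamma (μ₁ + μ₂)
          / ((x ^ γ + t ^ γ) ^ (μ₁ + μ₂) * Real.Gamma μ₁ * Real.Gamma μ₂) := by
  set c : ℝ := x ^ γ + t ^ γ with hc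
  have hcpos : 0 < c := by positivity
  set C : ℝ := γ ^ 2 * x ^ (μ₁ * γ - 1) * t ^ (μ₂ * γ) / (Real.Gamma μ₁ * Real.Gamma μ₂)
    with hC
  set g : ℝ → ℝ := fun y => y ^ ((μ₁ + μ₂) * γ - 1) * Real.exp (-c * y ^ γ) with hg
  have hGamma₁ : 0 < Real.Gamma μ₁ := Real.Gamma_pos_of_pos hμ₁
  have hGamma₂ : 0 < Real.Gamma μ₂ := Real.Gamma_pos_of_pos hμ₂
  have key : ∀ s ∈ Set.Ioi (0:ℝ),
      (γ * (x / s) ^ (μ₁ * γ - 1) * Real.exp (-((x / s) ^ γ)) / (s * Real.Gamma μ₁)) *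
        (γ * (s / t) ^ (-(μ₂ * γ) - 1) * Real.exp (-((t / s) ^ γ)) / (t * Real.Gamma μ₂))
      = C * ((|(-1 : ℝ)| * s ^ ((-1 : ℝ) - 1)) • g (s ^ (-1 : ℝ))) := by
    intro s hs
    have hs0 : (0:ℝ) < s := hs
    have hE1 : Real.exp (-c * (s ^ (-1 : ℝ)) ^ γ)
        = Real.exp (-((x / s) ^ γ)) * Real.exp (-((t / s) ^ γ)) := by
      rw [← Real.exp_add, Real.rpow_neg_one, Real.inv_rpow hs0.le,
        Real.div_rpow hx.le hs0.le, Real.div_rpow ht.le hs0.le, hc]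
      congr 1
      field_simp
      ring
    have h1 : (x / s) ^ (μ₁ * γ - 1)
        = Real.exp ((Real.log x - Real.log s) * (μ₁ * γ - 1)) := by
      rw [Real.rpow_def_of_pos (div_pos hx hs0), Real.log_div hx.ne' hs0.ne']
    have h2 : (s / t) ^ (-(μ₂ * γ) - 1)
        = Real.exp ((Real.log s - Real.log t) * (-(μ₂ * γ) - 1)) := by
      rw [Real.rpow_def_of_pos (div_pos hs0 ht), Real.log_div hs0.ne' ht.ne']
    have h3 : s ^ ((-1 : ℝ) - 1) = Real.exp (Real.log s * ((-1 : ℝ) - 1)) :=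
      Real.rpow_def_of_pos hs0 _
    have h4 : (s ^ (-1 : ℝ)) ^ ((μ₁ + μ₂) * γ - 1)
        = Real.exp (Real.log s * (-1) * ((μ₁ + μ₂) * γ - 1)) := by
      rw [Real.rpow_def_of_pos hs0, exp_rpow_aux]
    have h5 : x ^ (μ₁ * γ - 1) = Real.exp (Real.log x * (μ₁ * γ - 1)) :=
      Real.rpow_def_of_pos hx _
    have h6 : t ^ (μ₂ * γ) = Real.exp (Real.log t * (μ₂ * γ)) :=
      Real.rpow_def_of_pos ht _
    have hse : s = Real.exp (Real.log s) := (Real.exp_log hs0).symm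
    have hte : t = Real.exp (Real.log t) := (Real.exp_log ht).symm
    have hP : Real.exp ((Real.log x - Real.log s) * (μ₁ * γ - 1)) *
          Real.exp ((Real.log s - Real.log t) * (-(μ₂ * γ) - 1))
        = Real.exp (Real.log x * (μ₁ * γ - 1)) * Real.exp (Real.log t * (μ₂ * γ)) *
          Real.exp (Real.log s * ((-1 : ℝ) - 1)) *
          Real.exp (-(Real.log s * ((μ₁ + μ₂) * γ - 1))) *
          Real.exp (Real.log s) * Real.exp (Real.log t) := by
      simp only [← Real.exp_add]
      congr 1
      ring
    rw [Real.exp_log hs0, Real.exp_log ht] at hP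
    have hgs : g (s ^ (-1:ℝ)) = (s ^ (-1:ℝ)) ^ ((μ₁ + μ₂) * γ - 1) *
        Real.exp (-c * (s ^ (-1:ℝ)) ^ γ) := rfl
    rw [hgs, smul_eq_mul, hC, hE1, h1, h2, h3, h4, h5, h6]
    simp only [abs_neg, abs_one, one_mul]
    have hexp_ne : ∀ z : ℝ, Real.exp z ≠ 0 := fun z => (Real.exp_pos z).ne'
    field_simp
    linear_combination (norm := ring_nf) hP
  rw [setIntegral_congr_fun measurableSet_Ioi key, integral_const_mul,
    integral_comp_rpow_Ioi g (by norm_num : (-1:ℝ) ≠ 0)]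
  have hq : (-1 : ℝ) < (μ₁ + μ₂) * γ - 1 := by nlinarith
  rw [hg]
  rw [integral_rpow_mul_exp_neg_mul_rpow hγ hq hcpos]
  have hdiv : ((μ₁ + μ₂) * γ - 1 + 1) / γ = μ₁ + μ₂ := by simp only [sub_add_cancel]; field_simp
  have hdiv2 : -((μ₁ + μ₂) * γ - 1 + 1) / γ = -(μ₁ + μ₂) := by
    field_simp
    ring
  rw [hdiv, hdiv2, Real.rpow_neg hcpos.le, hC,
    show μ₁ * γ - 1 = γ * μ₁ - 1 by ring, show μ₂ * γ = γ * μ₂ by ring]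
  field_simp
end
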